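/- arXiv:1106.1255 — 4 statements merged into one kernel-verified Lean document; each statement's English description precedes it below -/
import Mathlib

section
/- The Kronecker product G₁ × G₂ of two nontrivial graphs is connected if and only if both G₁ and G₂ are connected and at least one of them is non-bipartite. -/
open SimpleGraph

universe u v

/-- Kronecker (direct / tensor) product of two simple graphs. -/
def SimpleGraph.tensor {V : Type u} {W : Type v} (G : SimpleGraph V) (H : SimpleGraph W) :
    SimpleGraph (V × W) where
  Adj p q := G.Adj p.1 q.1 ∧ H.Adj p.2 q.2
  symm := ⟨fun _ _ h => ⟨h.1.symm, h.2.symm⟩⟩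
  loopless := ⟨fun _ h => G.loopless.irrefl _ h.1⟩

/-- `G × K₂`, realized on `V × Bool` (where `false` plays the role of `a` and `true` of `b`):
`(u,x)` is adjacent to `(v,y)` iff `uv ∈ E(G)` and `x ≠ y`. -/
def timesK2 {V : Type u} (G : SimpleGraph V) : SimpleGraph (V × Bool) :=
  G.tensor ⊤

/-- `C` is (the vertex set of) a connected component of the graph `H`. -/
def IsComp {α : Type u} (H : SimpleGraph α) (C : Set α) : Prop :=
  ∃ K : H.ConnectedComponent, C = K.supp

/-- `C ⊆ V` is (the vertex set of) a connected component of the induced subgraph `G[s]`. -/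
def IsCompOf {V : Type u} (G : SimpleGraph V) (s C : Set V) : Prop :=
  ∃ K : (G.induce s).ConnectedComponent, C = Subtype.val '' K.supp

/-- `(X, Y)` is a b-pair of `G`: `X` and `Y` are disjoint, `V(G) - (X ∪ Y)` is nonempty,
`G - (X ∪ Y)` has a bipartite component `C`, and `G[V(C) ∪ {x}]` is bipartite
for each `x ∈ X`.  (Bipartite = 2-colorable.) -/
def IsBPair {V : Type u} (G : SimpleGraph V) (X Y : Set V) : Prop :=
  Disjoint X Y ∧ ((X ∪ Y)ᶜ : Set V).Nonempty ∧
    ∃ C : Set V, IsCompOf G ((X ∪ Y)ᶜ) C ∧ (G.induce C).Colorable 2 ∧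
      ∀ x ∈ X, (G.induce (C ∪ {x})).Colorable 2

/-- `b(G) = min{|X| + 2|Y| : (X,Y) is a b-pair of G}`. -/
noncomputable def bInv {V : Type u} (G : SimpleGraph V) : ℕ :=
  sInf {n | ∃ X Y : Set V, IsBPair G X Y ∧ n = X.ncard + 2 * Y.ncard}

/-- `S` is a separating set of `G`: removing `S` leaves a disconnected graph,
or a graph with at most one vertex. -/
def IsSeparating {V : Type u} (G : SimpleGraph V) (S : Set V) : Prop :=
  ¬ (G.induce Sᶜ).Connected ∨ (Sᶜ : Set V).Subsingleton

/-- The vertex connectivity `κ(G)`: the fewest number of vertices whose removal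
disconnects `G` or leaves at most a single vertex. -/
noncomputable def kappa {V : Type u} (G : SimpleGraph V) : ℕ :=
  sInf {n | ∃ S : Set V, IsSeparating G S ∧ n = S.ncard}

/-- The quotient-like graph `G*` whose vertices are the nonempty classes
`S'_u = ({u} × {a,b}) − S` (indexed by `u ∈ V(G)`), with `S'_u ~ S'_v` iff
`G × K₂ − S` has an edge with one end in `S'_u` and the other in `S'_v`. -/
def starGraph {V : Type u} (G : SimpleGraph V) (S : Set (V × Bool)) : SimpleGraph V where
  Adj u v := u ≠ v ∧ ∃ x y : Bool, (u, x) ∉ S ∧ (v, y) ∉ S ∧ (timesK2 G).Adj (u, x) (v, y)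
  symm := by
    constructor
    rintro u v ⟨h, x, y, hx, hy, hadj⟩
    exact ⟨h.symm, y, x, hy, hx, hadj.symm⟩
  loopless := ⟨fun u h => h.1 rfl⟩

section Aux
variable {V : Type u} {W : Type v}

lemma exists_adj_of_connected [Nontrivial V] {G : SimpleGraph V} (hG : G.Connected) (u : V) :
    ∃ x, G.Adj u x := by
  obtain ⟨v, hv⟩ := exists_ne u
  obtain ⟨p⟩ := hG.preconnected u v
  cases p with
  | nil => exact absurd rfl hv
  | cons h _ => exact ⟨_, h⟩

lemma exists_walk_add_two [Nontrivial V] {G : SimpleGraph V} (hG : G.Connected)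
    {u u' : V} (p : G.Walk u u') (m : ℕ) :
    ∃ q : G.Walk u u', q.length = p.length + 2 * m := by
  induction m with
  | zero => exact ⟨p, by ring⟩
  | succ n ih =>
    obtain ⟨q, hq⟩ := ih
    obtain ⟨x, hx⟩ := exists_adj_of_connected hG u
    exact ⟨.cons hx (.cons hx.symm q), by simp [Walk.length_cons, hq]; ring⟩

lemma exists_odd_closed_walk {G : SimpleGraph V} (hG : G.Connected) (hnc : ¬ G.Colorable 2)
    (u : V) : ∃ p : G.Walk u u, Odd p.length := by
  by_contra hcon
  push_neg at hcon
  apply hnc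
  have hwalk : ∀ v, G.Walk u v := fun v => (hG.preconnected u v).some
  have C : G.Coloring Bool := by
    refine Coloring.mk (fun v => decide (Odd (hwalk v).length)) ?_
    intro v w h hvw
    have hclosed := hcon ((hwalk v).append (Walk.cons h (hwalk w).reverse))
    simp only [Walk.length_append, Walk.length_cons, Walk.length_reverse] at hclosed
    simp only [decide_eq_decide, Nat.odd_iff] at hvw
    simp only [Nat.odd_iff] at hclosed
    omega
  simpa using C.colorable

lemma tensor_reach_of_eq_length {G : SimpleGraph V} {H : SimpleGraph W} :
    ∀ {a b : V} {c d : W} (p : G.Walk a b) (q : H.Walk c d),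
      p.length = q.length → (G.tensor H).Reachable (a, c) (b, d) := by
  intro a b c d p
  induction p generalizing c with
  | nil =>
    intro q hq
    cases q with
    | nil => exact Reachable.refl _
    | cons _ _ => simp at hq
  | @cons a x b h p ih =>
    intro q hq
    cases q with
    | nil => simp at hq
    | @cons _ y _ h' q' =>
      have hadj : (G.tensor H).Adj (a, c) (x, y) := ⟨h, h'⟩
      exact hadj.reachable.trans (ih q' (by simpa using hq))

lemma tensor_preconnected [Nontrivial V] [Nontrivial W] {G : SimpleGraph V} {H : SimpleGraph W}
    (hG : G.Connected) (hH : H.Connected) (hnc : ¬ G.Colorable 2) :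
    (G.tensor H).Preconnected := by
  rintro ⟨u, w⟩ ⟨u', w'⟩
  obtain ⟨p0⟩ := hG.preconnected u u'
  obtain ⟨q0⟩ := hH.preconnected w w'
  obtain ⟨p, hp⟩ : ∃ p : G.Walk u u', p.length % 2 = q0.length % 2 := by
    by_cases hpar : p0.length % 2 = q0.length % 2
    · exact ⟨p0, hpar⟩
    · obtain ⟨l, hl⟩ := exists_odd_closed_walk hG hnc u
      refine ⟨l.append p0, ?_⟩
      rw [Walk.length_append]
      rw [Nat.odd_iff] at hl
      omega
  rcases le_or_gt p.length q0.length with hle | hlt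
  · obtain ⟨p', hp'⟩ := exists_walk_add_two hG p ((q0.length - p.length) / 2)
    exact tensor_reach_of_eq_length p' q0 (by omega)
  · obtain ⟨q', hq'⟩ := exists_walk_add_two hH q0 ((p.length - q0.length) / 2)
    exact tensor_reach_of_eq_length p q' (by omega)

def tensorFstHom (G : SimpleGraph V) (H : SimpleGraph W) : G.tensor H →g G :=
  ⟨Prod.fst, fun h => h.1⟩

def tensorSndHom (G : SimpleGraph V) (H : SimpleGraph W) : G.tensor H →g H :=
  ⟨Prod.snd, fun h => h.2⟩

def tensorSwapHom (G : SimpleGraph V) (H : SimpleGraph W) : H.tensor G →g G.tensor H :=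
  ⟨Prod.swap, fun h => ⟨h.2, h.1⟩⟩

end Aux

section Main
variable {V : Type u} {W : Type v}

lemma fin2_aux : ∀ a b c : Fin 2, a ≠ b → ((a = c) ↔ (b = c)) → False := by decide

lemma fin2_flip : ∀ a b c d : Fin 2, a ≠ b → c ≠ d → ((a = c) ↔ (b = d)) := by decide

/-- The Kronecker product of two nontrivial graphs is connected iff both factors are
connected and at least one of them is non-bipartite. -/
theorem stmt_5 {V : Type u} {W : Type v} [Fintype V] [Fintype W]
    [Nontrivial V] [Nontrivial W] (G : SimpleGraph V) (H : SimpleGraph W) :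
    (G.tensor H).Connected ↔
      G.Connected ∧ H.Connected ∧ (¬ G.Colorable 2 ∨ ¬ H.Colorable 2) := by
  constructor
  · intro hT
    have hGc : G.Connected := by
      refine ⟨fun u u' => ?_⟩
      obtain ⟨w⟩ : Nonempty W := inferInstance
      obtain ⟨P⟩ := hT.preconnected (u, w) (u', w)
      exact ⟨P.map (tensorFstHom G H)⟩
    have hHc : H.Connected := by
      refine ⟨fun w w' => ?_⟩
      obtain ⟨u⟩ : Nonempty V := inferInstance
      obtain ⟨P⟩ := hT.preconnected (u, w) (u, w')
      exact ⟨P.map (tensorSndHom G H)⟩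
    refine ⟨hGc, hHc, ?_⟩
    by_contra hb
    push_neg at hb
    obtain ⟨⟨cG⟩, ⟨cH⟩⟩ := hb
    -- the invariant
    have inv : ∀ {p q : V × W}, (G.tensor H).Reachable p q →
        ((cG p.1 = cH p.2) ↔ (cG q.1 = cH q.2)) := by
      rintro p q ⟨P⟩
      induction P with
      | nil => rfl
      | cons h _ ih =>
        exact (fin2_flip _ _ _ _ (cG.valid h.1) (cH.valid h.2)).trans ih
    obtain ⟨u, u', hadj⟩ : ∃ u u', G.Adj u u' := by
      obtain ⟨u⟩ : Nonempty V := inferInstance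
      obtain ⟨x, hx⟩ := exists_adj_of_connected hGc u
      exact ⟨u, x, hx⟩
    obtain ⟨w⟩ : Nonempty W := inferInstance
    exact fin2_aux _ _ _ (cG.valid hadj) (inv (hT.preconnected (u, w) (u', w)))
  · rintro ⟨hG, hH, hodd | hodd⟩
    · exact ⟨tensor_preconnected hG hH hodd⟩
    · refine ⟨fun p q => ?_⟩
      obtain ⟨P⟩ := tensor_preconnected hH hG hodd p.swap q.swap
      exact ⟨P.map (tensorSwapHom G H)⟩


end Main
end

section
/- For every graph G, κ(G × K₂) = min{2κ(G), b(G)}. -/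
open SimpleGraph

universe u v

section helpers
variable {α : Type u}

/-- deleted graph: spanning graph on full vertex type keeping only edges inside s -/
private def dgr {α : Type u} (Γ : SimpleGraph α) (s : Set α) : SimpleGraph α where
  Adj a b := Γ.Adj a b ∧ a ∈ s ∧ b ∈ s
  symm := ⟨fun _ _ h => ⟨h.1.symm, h.2.2, h.2.1⟩⟩
  loopless := ⟨fun _ h => Γ.loopless.irrefl _ h.1⟩

private lemma reach_closed {α : Type u} {Γ : SimpleGraph α} (P : α → Prop)
    (hP : ∀ a b, Γ.Adj a b → P a → P b) {x y : α} (h : Γ.Reachable x y) (hx : P x) : P y := by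
  obtain ⟨w⟩ := h
  induction w with
  | nil => exact hx
  | cons h p ih => exact ih (hP _ _ h hx)

private lemma dgr_reach_of_induce {α : Type u} {Γ : SimpleGraph α} {s : Set α}
    {x y : ↥s} (h : (Γ.induce s).Reachable x y) : (dgr Γ s).Reachable x.1 y.1 := by
  obtain ⟨w⟩ := h
  induction w with
  | nil => exact Reachable.refl _
  | @cons a b c h p ih =>
      exact (Adj.reachable (G := dgr Γ s) ⟨h, a.2, b.2⟩).trans ih

private lemma induce_reach_of_dgr {α : Type u} {Γ : SimpleGraph α} {s : Set α}
    {x y : α} (h : (dgr Γ s).Reachable x y) (hx : x ∈ s) (hy : y ∈ s) :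
    (Γ.induce s).Reachable ⟨x, hx⟩ ⟨y, hy⟩ := by
  obtain ⟨w⟩ := h
  induction w with
  | nil => exact Reachable.refl _
  | @cons a b c h p ih =>
      exact (Adj.reachable (G := Γ.induce s) (by exact h.1 : (Γ.induce s).Adj ⟨a, h.2.1⟩ ⟨b, h.2.2⟩)).trans
        (ih h.2.2 hy)

private lemma not_connected_of_dgr {α : Type u} {Γ : SimpleGraph α} {s : Set α}
    {x y : α} (hx : x ∈ s) (hy : y ∈ s) (h : ¬ (dgr Γ s).Reachable x y) :
    ¬ (Γ.induce s).Connected := by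
  intro hc
  exact h (dgr_reach_of_induce (hc.preconnected ⟨x, hx⟩ ⟨y, hy⟩))

private lemma exists_unreachable {α : Type u} {Γ : SimpleGraph α} {s : Set α}
    (h : ¬ (Γ.induce s).Connected) (hne : s.Nonempty) :
    ∃ x ∈ s, ∃ y ∈ s, ¬ (dgr Γ s).Reachable x y := by
  rw [SimpleGraph.connected_iff] at h
  push_neg at h
  have hne' : Nonempty ↥s := hne.to_subtype
  obtain ⟨x, y, hxy⟩ : ∃ x y : ↥s, ¬ (Γ.induce s).Reachable x y := by
    by_contra hc
    push_neg at hc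
    exact (not_isEmpty_iff.mpr hne') (h (fun a b => hc a b))
  exact ⟨x.1, x.2, y.1, y.2, fun hr => hxy (induce_reach_of_dgr hr x.2 y.2)⟩

private lemma fin2_aux_s10 : ∀ x y : Fin 2, ((x = 1) ↔ (y = 1)) → x = y := by decide

private lemma colorable_of_bool {Γ : SimpleGraph α} {s : Set α} (c : α → Bool)
    (h : ∀ a b, a ∈ s → b ∈ s → Γ.Adj a b → c a ≠ c b) : (Γ.induce s).Colorable 2 := by
  refine ⟨SimpleGraph.Coloring.mk (fun p => if c p.1 then 1 else 0) ?_⟩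
  intro a b hab
  have : Γ.Adj a.1 b.1 := hab
  have hne := h a.1 b.1 a.2 b.2 this
  cases hca : c a.1 <;> cases hcb : c b.1 <;> simp_all

private lemma bool_of_colorable {Γ : SimpleGraph α} {s : Set α}
    (h : (Γ.induce s).Colorable 2) :
    ∃ c : α → Bool, ∀ a b, a ∈ s → b ∈ s → Γ.Adj a b → c a ≠ c b := by
  obtain ⟨col⟩ := h
  classical
  refine ⟨fun v => if hv : v ∈ s then decide (col ⟨v, hv⟩ = 1) else false, ?_⟩
  intro a b ha hb hab hcc
  simp only [dif_pos ha, dif_pos hb] at hcc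
  have : col ⟨a, ha⟩ ≠ col ⟨b, hb⟩ := col.valid (by exact hab)
  apply this
  exact fin2_aux_s10 _ _ (decide_eq_decide.mp hcc)

private lemma isCompOf_props {Γ : SimpleGraph α} {s C : Set α} (h : IsCompOf Γ s C) :
    C.Nonempty ∧ C ⊆ s ∧ (∀ x ∈ C, ∀ y ∈ C, (dgr Γ s).Reachable x y) ∧
      (∀ x ∈ C, ∀ y ∈ s, Γ.Adj x y → y ∈ C) := by
  obtain ⟨K, rfl⟩ := h
  obtain ⟨w, hw⟩ := K.exists_rep
  refine ⟨⟨w.1, ⟨w, by rw [ConnectedComponent.mem_supp_iff]; exact hw, rfl⟩⟩, ?_, ?_, ?_⟩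
  · rintro x ⟨a, _, rfl⟩; exact a.2
  · rintro x ⟨a, ha, rfl⟩ y ⟨b, hb, rfl⟩
    rw [ConnectedComponent.mem_supp_iff] at ha hb
    have : (Γ.induce s).Reachable a b := ConnectedComponent.exact (ha.trans hb.symm)
    exact dgr_reach_of_induce this
  · rintro x ⟨a, ha, rfl⟩ y hy hadj
    refine ⟨⟨y, hy⟩, ?_, rfl⟩
    rw [ConnectedComponent.mem_supp_iff] at ha ⊢
    rw [← ha]
    exact ConnectedComponent.sound (Adj.reachable (by exact hadj.symm))

private lemma mem_comp_iff {Γ : SimpleGraph α} {s : Set α} {x : α} (hx : x ∈ s) (y : α) :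
    y ∈ Subtype.val '' ((Γ.induce s).connectedComponentMk ⟨x, hx⟩).supp ↔
      y ∈ s ∧ (dgr Γ s).Reachable x y := by
  constructor
  · rintro ⟨a, ha, rfl⟩
    rw [ConnectedComponent.mem_supp_iff] at ha
    exact ⟨a.2, (dgr_reach_of_induce (ConnectedComponent.exact ha)).symm⟩
  · rintro ⟨hy, hr⟩
    refine ⟨⟨y, hy⟩, ?_, rfl⟩
    rw [ConnectedComponent.mem_supp_iff]
    exact ConnectedComponent.sound (induce_reach_of_dgr hr.symm hy hx)

private lemma ncard_fiber_prod [Fintype α] (Y : Set α) :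
    ({p : α × Bool | p.1 ∈ Y}).ncard = 2 * Y.ncard := by
  classical
  have h1 : {p : α × Bool | p.1 ∈ Y} = Y ×ˢ (Set.univ : Set Bool) := by
    ext p; simp [Set.mem_prod]
  rw [h1, ← Nat.card_coe_set_eq, Nat.card_congr (Equiv.Set.prod _ _), Nat.card_prod,
    Nat.card_coe_set_eq, Nat.card_congr (Equiv.Set.univ Bool), Nat.card_eq_fintype_card,
    Fintype.card_bool, mul_comm]

private lemma ncard_split [Fintype α] (S : Set (α × Bool)) :
    S.ncard = ({u | (u, false) ∈ S}).ncard + ({u | (u, true) ∈ S}).ncard := by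
  classical
  have h0 : (fun u : α => (u, false)) '' {u | (u, false) ∈ S} ∪
      (fun u : α => (u, true)) '' {u | (u, true) ∈ S} = S := by
    ext ⟨u, x⟩
    cases x <;> simp
  conv_lhs => rw [← h0]
  rw [Set.ncard_union_eq, Set.ncard_image_of_injective _ (fun a b h => (Prod.mk.injEq _ _ _ _).mp h |>.1),
    Set.ncard_image_of_injective _ (fun a b h => (Prod.mk.injEq _ _ _ _).mp h |>.1)]
  · rw [Set.disjoint_left]
    rintro ⟨u, x⟩ ⟨a, _, ha⟩ ⟨b, _, hb⟩
    rw [← hb] at ha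
    exact Bool.false_ne_true ((Prod.mk.injEq _ _ _ _).mp ha).2

end helpers

section api
variable {α : Type u}

private lemma univ_separating (Γ : SimpleGraph α) : IsSeparating Γ Set.univ := by
  right
  rw [Set.compl_univ]
  exact Set.subsingleton_empty

private lemma kappa_le {Γ : SimpleGraph α} {S : Set α} (h : IsSeparating Γ S) :
    kappa Γ ≤ S.ncard := Nat.sInf_le ⟨S, h, rfl⟩

private lemma kappa_mem (Γ : SimpleGraph α) : kappa Γ ∈ {n | ∃ S : Set α, IsSeparating Γ S ∧ n = S.ncard} :=
  Nat.sInf_mem ⟨Set.univ.ncard, Set.univ, univ_separating Γ, rfl⟩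

private lemma le_kappa {Γ : SimpleGraph α} {m : ℕ}
    (h : ∀ S, IsSeparating Γ S → m ≤ S.ncard) : m ≤ kappa Γ :=
  le_csInf ⟨Set.univ.ncard, Set.univ, univ_separating Γ, rfl⟩
    (by rintro n ⟨S, hS, rfl⟩; exact h S hS)

private lemma bInv_le {V : Type u} (G : SimpleGraph V) {X Y : Set V} (h : IsBPair G X Y) :
    bInv G ≤ X.ncard + 2 * Y.ncard := Nat.sInf_le ⟨X, Y, h, rfl⟩

private lemma bpair_trivial {V : Type u} [Fintype V] (G : SimpleGraph V) (v : V) :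
    IsBPair G ({v}ᶜ) ∅ := by
  classical
  refine ⟨Set.disjoint_empty _, ?_, {v}, ?_, ?_, ?_⟩
  · rw [Set.union_empty, compl_compl]; exact ⟨v, rfl⟩
  · rw [Set.union_empty, compl_compl]
    refine ⟨(G.induce {v}).connectedComponentMk ⟨v, rfl⟩, ?_⟩
    ext y
    constructor
    · rintro rfl
      exact ⟨⟨y, rfl⟩, by rw [ConnectedComponent.mem_supp_iff], rfl⟩
    · rintro ⟨a, _, rfl⟩
      exact a.2
  · refine colorable_of_bool (fun _ => false) ?_
    intro a b ha hb hadj _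
    rw [Set.mem_singleton_iff] at ha hb
    rw [ha, hb] at hadj
    exact G.loopless.irrefl _ hadj
  · intro x hx
    refine colorable_of_bool (fun w => decide (w = x)) ?_
    intro a b ha hb hadj hcc
    have hab : a ≠ b := G.ne_of_adj hadj
    by_cases hax : a = x
    · have : b = x := by
        have := decide_eq_decide.mp hcc
        exact this.mp hax
      exact hab (hax.trans this.symm)
    · have hbx : b ≠ x := fun hbx => hax ((decide_eq_decide.mp hcc).mpr hbx)
      have ha' : a = v := by
        rcases ha with h | h
        · exact h
        · exact absurd h hax
      have hb' : b = v := by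
        rcases hb with h | h
        · exact h
        · exact absurd h hbx
      exact hab (ha'.trans hb'.symm)

private lemma bInv_mem {V : Type u} [Fintype V] [Nonempty V] (G : SimpleGraph V) :
    bInv G ∈ {n | ∃ X Y : Set V, IsBPair G X Y ∧ n = X.ncard + 2 * Y.ncard} := by
  obtain ⟨v⟩ := ‹Nonempty V›
  exact Nat.sInf_mem ⟨_, {v}ᶜ, ∅, bpair_trivial G v, rfl⟩

private lemma bInv_le_card {V : Type u} [Fintype V] [Nonempty V] (G : SimpleGraph V) :
    bInv G + 1 ≤ Fintype.card V := by
  obtain ⟨v⟩ := ‹Nonempty V›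
  have h := bInv_le G (bpair_trivial G v)
  have h2 := Set.ncard_add_ncard_compl ({v} : Set V)
  rw [Set.ncard_singleton, Nat.card_eq_fintype_card] at h2
  rw [Set.ncard_empty] at h
  omega

end api

section parts
variable {V : Type u} [Fintype V]

private lemma timesK2_adj {G : SimpleGraph V} {p q : V × Bool} :
    (timesK2 G).Adj p q ↔ G.Adj p.1 q.1 ∧ p.2 ≠ q.2 := Iff.rfl

private lemma proj_reach {G : SimpleGraph V} {t : Set V} {p q : V × Bool}
    (h : (dgr (timesK2 G) {r : V × Bool | r.1 ∈ t}).Reachable p q) :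
    (dgr G t).Reachable p.1 q.1 := by
  obtain ⟨w⟩ := h
  induction w with
  | nil => exact Reachable.refl _
  | @cons a b c h p ih =>
      exact (Adj.reachable (G := dgr G t) ⟨h.1.1, h.2.1, h.2.2⟩).trans ih

private lemma partI {G : SimpleGraph V} {T : Set V} (hT : IsSeparating G T) :
    IsSeparating (timesK2 G) {p : V × Bool | p.1 ∈ T} := by
  classical
  have hcompl : ({p : V × Bool | p.1 ∈ T})ᶜ = {p : V × Bool | p.1 ∈ Tᶜ} := by
    ext p; simp
  left
  rw [hcompl]
  by_cases hne : Tᶜ.Nonempty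
  · rcases hT with hdis | hsub
    · obtain ⟨x, hx, y, hy, hxy⟩ := exists_unreachable hdis hne
      refine not_connected_of_dgr (x := (x, false)) (y := (y, false)) hx hy ?_
      intro hr
      exact hxy (proj_reach hr)
    · obtain ⟨u, hu⟩ := hne
      refine not_connected_of_dgr (x := (u, false)) (y := (u, true)) hu hu ?_
      intro hr
      have : (u, true) = ((u, false) : V × Bool) := by
        refine reach_closed (fun r => r = (u, false)) ?_ hr rfl
        rintro a b hab rfl
        have hb1 : b.1 = u := hsub hab.2.2 hu
        exact absurd (hb1 ▸ hab.1.1) (G.loopless.irrefl u)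
      simp at this
  · intro hc
    obtain ⟨p⟩ := hc.nonempty
    exact hne ⟨p.1.1, p.2⟩

private lemma dgr_reach_restrict {α : Type u} {Γ : SimpleGraph α} {s C : Set α}
    (hcl : ∀ a ∈ C, ∀ b ∈ s, Γ.Adj a b → b ∈ C) {x y : α}
    (h : (dgr Γ s).Reachable x y) (hx : x ∈ C) : (dgr Γ C).Reachable x y := by
  obtain ⟨w⟩ := h
  induction w with
  | nil => exact Reachable.refl _
  | @cons a b c h p ih =>
      have hb : b ∈ C := hcl a hx b h.2.2 h.1
      exact (Adj.reachable (G := dgr Γ C) ⟨h.1, hx, hb⟩).trans (ih hb)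

private lemma bool_ne_eq {x y : Bool} (h : x ≠ y) : y = !x := by
  cases x <;> cases y <;> simp_all

private lemma two_colorings_parity {α : Type u} {Γ : SimpleGraph α} {C : Set α} {c d : α → Bool}
    (hc : ∀ a b, a ∈ C → b ∈ C → Γ.Adj a b → c a ≠ c b)
    (hd : ∀ a b, a ∈ C → b ∈ C → Γ.Adj a b → d a ≠ d b)
    {x y : α} (h : (dgr Γ C).Reachable x y) (hx : x ∈ C) :
    ((c x = c y) ↔ (d x = d y)) := by
  have := reach_closed (fun w => w ∈ C ∧ ((c x = c w) ↔ (d x = d w))) ?_ h ⟨hx, by simp⟩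
  · exact this.2
  · rintro a b ⟨hab, haC, hbC⟩ ⟨_, hiff⟩
    refine ⟨hbC, ?_⟩
    have h1 : c b = !(c a) := bool_ne_eq (hc a b haC hbC hab)
    have h2 : d b = !(d a) := bool_ne_eq (hd a b haC hbC hab)
    rw [h1, h2]
    cases hca : c a <;> cases hda : d a <;> cases hcx : c x <;> cases hdx : d x <;> simp_all

private lemma partII {G : SimpleGraph V} {X Y : Set V} (h : IsBPair G X Y) :
    ∃ S : Set (V × Bool), IsSeparating (timesK2 G) S ∧ S.ncard = X.ncard + 2 * Y.ncard := by
  classical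
  obtain ⟨hdisj, hne, C, hcomp, hcol, hext⟩ := h
  obtain ⟨hCne, hCsub, hCreach, hCclosed⟩ := isCompOf_props hcomp
  obtain ⟨c, hc⟩ := bool_of_colorable hcol
  set σ : V → Bool := fun x =>
    if h : ∃ v, v ∈ C ∧ G.Adj x v then !(c h.choose) else false with hσ
  -- key claim
  have key : ∀ x ∈ X, ∀ v ∈ C, G.Adj x v → σ x = !(c v) := by
    intro x hx v hv hadj
    have hex : ∃ w, w ∈ C ∧ G.Adj x w := ⟨v, hv, hadj⟩
    have hv₀ := hex.choose_spec
    set v₀ := hex.choose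
    have hσx : σ x = !(c v₀) := by rw [hσ]; simp only [dif_pos hex]; rfl
    obtain ⟨d, hd⟩ := bool_of_colorable (hext x hx)
    -- d is proper on C ∪ {x} hence on C
    have hdC : ∀ a b, a ∈ C → b ∈ C → G.Adj a b → d a ≠ d b := fun a b ha hb =>
      hd a b (Or.inl ha) (Or.inl hb)
    have hxCx : x ∈ C ∪ {x} := Or.inr rfl
    have h1 : d v₀ ≠ d x := fun hh =>
      hd x v₀ hxCx (Or.inl hv₀.1) hv₀.2 hh.symm
    have h2 : d v ≠ d x := fun hh => hd x v hxCx (Or.inl hv) hadj hh.symm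
    have hdv : d v₀ = d v := by
      cases hdv0 : d v₀ <;> cases hdvv : d v <;> cases hdxx : d x <;> simp_all
    have hreach : (dgr G C).Reachable v₀ v := by
      refine dgr_reach_restrict ?_ (hCreach v₀ hv₀.1 v hv) hv₀.1
      intro a ha b hb hab
      exact hCclosed a ha b hb hab
    have : c v₀ = c v := (two_colorings_parity hc hdC hreach hv₀.1).mpr hdv
    rw [hσx, this]
  set S : Set (V × Bool) := {p | p.1 ∈ Y} ∪ (fun x => (x, σ x)) '' X with hSdef
  have hmemS : ∀ p : V × Bool, p ∈ S ↔ p.1 ∈ Y ∨ (p.1 ∈ X ∧ p.2 = σ p.1) := by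
    intro p
    constructor
    · rintro (h | ⟨x, hx, rfl⟩)
      · exact Or.inl h
      · exact Or.inr ⟨hx, rfl⟩
    · rintro (h | ⟨h1, h2⟩)
      · exact Or.inl h
      · exact Or.inr ⟨p.1, h1, Prod.ext rfl h2.symm⟩
  refine ⟨S, ?_, ?_⟩
  · left
    obtain ⟨v₀, hv₀⟩ := hCne
    have hv₀s : v₀ ∈ (X ∪ Y)ᶜ := hCsub hv₀
    have hv₀X : v₀ ∉ X := fun hh => hv₀s (Or.inl hh)
    have hv₀Y : v₀ ∉ Y := fun hh => hv₀s (Or.inr hh)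
    have hp₀ : (v₀, c v₀) ∈ Sᶜ := by
      intro hh
      rcases (hmemS _).mp hh with h | ⟨h, _⟩
      · exact hv₀Y h
      · exact hv₀X h
    have hp₁ : (v₀, !(c v₀)) ∈ Sᶜ := by
      intro hh
      rcases (hmemS _).mp hh with h | ⟨h, _⟩
      · exact hv₀Y h
      · exact hv₀X h
    refine not_connected_of_dgr hp₀ hp₁ ?_
    intro hr
    have := reach_closed (fun p => p.1 ∈ C ∧ p.2 = c p.1) ?_ hr ⟨hv₀, rfl⟩
    · have h2 := this.2
      simp at h2
    · rintro a b ⟨hab, _, hbS⟩ ⟨haC, hac⟩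
      have hGadj : G.Adj a.1 b.1 := hab.1
      have hbne : b.2 = !(c a.1) := by
        rw [← hac]; exact bool_ne_eq hab.2
      by_cases hbY : b.1 ∈ Y
      · exact absurd ((hmemS b).mpr (Or.inl hbY)) hbS
      by_cases hbX : b.1 ∈ X
      · have : σ b.1 = !(c a.1) := key b.1 hbX a.1 haC hGadj.symm
        exact absurd ((hmemS b).mpr (Or.inr ⟨hbX, by rw [hbne, this]⟩)) hbS
      · have hbC : b.1 ∈ C := hCclosed a.1 haC b.1 (fun hh => hh.elim hbX hbY) hGadj
        refine ⟨hbC, ?_⟩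
        rw [hbne, bool_ne_eq (hc a.1 b.1 haC hbC hGadj)]
  · have hdisj2 : Disjoint {p : V × Bool | p.1 ∈ Y} ((fun x => (x, σ x)) '' X) := by
      rw [Set.disjoint_left]
      rintro p hp ⟨x, hx, rfl⟩
      exact (Set.disjoint_right.mp hdisj hp) hx
    rw [hSdef, Set.ncard_union_eq hdisj2 (Set.toFinite _) (Set.toFinite _),
      ncard_fiber_prod, Set.ncard_image_of_injective _ (fun a b hh => congrArg Prod.fst hh),
      add_comm]

private lemma partIII {G : SimpleGraph V} [Nonempty V] {S : Set (V × Bool)}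
    (hS : IsSeparating (timesK2 G) S) : min (2 * kappa G) (bInv G) ≤ S.ncard := by
  classical
  by_contra hcon
  push_neg at hcon
  rw [lt_min_iff] at hcon
  obtain ⟨hk2, hkb⟩ := hcon
  set H := timesK2 G with hH
  set S0 : Set V := {u | (u, false) ∈ S} with hS0
  set S1 : Set V := {u | (u, true) ∈ S} with hS1
  set B : Set V := S0 ∩ S1 with hB
  set A : Set V := (S0 ∪ S1) \ B with hA
  set W : Set V := (S0 ∪ S1)ᶜ with hWdef
  set s : V → Bool := fun u => decide (u ∈ S0) with hs
  -- partition facts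
  have hpart : ∀ v : V, (v ∈ W ∧ v ∉ A ∧ v ∉ B) ∨ (v ∈ A ∧ v ∉ B ∧ v ∉ W) ∨
      (v ∈ B ∧ v ∉ A ∧ v ∉ W) := by
    intro v
    by_cases h0 : v ∈ S0 <;> by_cases h1 : v ∈ S1 <;>
      simp [hA, hB, hWdef, h0, h1]
  have hWS : ∀ u ∈ W, ∀ x : Bool, (u, x) ∉ S := by
    intro u hu x
    cases x
    · exact fun hh => hu (Or.inl hh)
    · exact fun hh => hu (Or.inr hh)
  have hsA : ∀ u ∈ A, (u, s u) ∉ S ∧ (u, !(s u)) ∈ S := by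
    intro u hu
    obtain ⟨hu1, hu2⟩ := hu
    by_cases h0 : u ∈ S0
    · have h1 : u ∉ S1 := fun hh => hu2 ⟨h0, hh⟩
      have : s u = true := by simp [hs, h0]
      rw [this]
      exact ⟨h1, h0⟩
    · have h1 : u ∈ S1 := hu1.resolve_left h0
      have : s u = false := by simp [hs, h0]
      rw [this]
      exact ⟨h0, h1⟩
  have hsurv : ∀ p : V × Bool, p ∉ S → p.1 ∈ W ∨ (p.1 ∈ A ∧ p.2 = s p.1) := by
    intro ⟨u, x⟩ hp
    rcases hpart u with ⟨h, _, _⟩ | ⟨h, _, _⟩ | ⟨h, _, _⟩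
    · exact Or.inl h
    · refine Or.inr ⟨h, ?_⟩
      obtain ⟨h1, h2⟩ := hsA u h
      cases hx : x <;> cases hsu : s u <;> simp_all
    · exact absurd (show (u,x) ∈ S by cases x; exacts [h.1, h.2]) hp
  -- cardinality
  have hcard : S.ncard = A.ncard + 2 * B.ncard := by
    have e1 := ncard_split S
    have eS0 : {u : V | (u, false) ∈ S} = S0 := rfl
    have eS1 : {u : V | (u, true) ∈ S} = S1 := rfl
    rw [eS0, eS1] at e1
    have e2 := Set.ncard_union_add_ncard_inter S0 S1 (Set.toFinite _) (Set.toFinite _)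
    have eB : S0 ∩ S1 = B := rfl
    rw [eB] at e2
    have e3 : A ∪ B = S0 ∪ S1 := Set.diff_union_of_subset (fun u hu => Or.inl hu.1)
    have e4 : (A ∪ B).ncard = A.ncard + B.ncard :=
      Set.ncard_union_eq Set.disjoint_sdiff_left (Set.toFinite _) (Set.toFinite _)
    rw [e3] at e4
    omega
  have hkn : S.ncard + 2 ≤ Fintype.card V := by
    have := bInv_le_card G
    omega
  -- W nonempty
  have hWne : W.Nonempty := by
    rw [Set.nonempty_iff_ne_empty]
    intro hemp
    have huniv : S0 ∪ S1 = Set.univ := by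
      rw [hWdef] at hemp
      exact Set.compl_empty_iff.mp hemp
    have e3 : A ∪ B = S0 ∪ S1 := Set.diff_union_of_subset (fun u hu => Or.inl hu.1)
    have e4 : (A ∪ B).ncard = A.ncard + B.ncard :=
      Set.ncard_union_eq Set.disjoint_sdiff_left (Set.toFinite _) (Set.toFinite _)
    rw [e3, huniv] at e4
    rw [Set.ncard_univ, Nat.card_eq_fintype_card] at e4
    omega
  -- disconnection
  have hcompl : S.ncard + Sᶜ.ncard = 2 * Fintype.card V := by
    have := Set.ncard_add_ncard_compl S
    rw [Nat.card_eq_fintype_card, Fintype.card_prod, Fintype.card_bool] at this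
    omega
  obtain ⟨p, hp, q, hq, hpq⟩ :
      ∃ p ∈ Sᶜ, ∃ q ∈ Sᶜ, ¬ (dgr H Sᶜ).Reachable p q := by
    rcases hS with hdis | hsub
    · refine exists_unreachable hdis ?_
      apply Set.nonempty_of_ncard_ne_zero
      omega
    · exfalso
      have : Sᶜ.ncard ≤ 1 := by
        rw [Set.ncard_le_one (Set.toFinite _)]
        intro a ha b hb
        exact hsub ha hb
      omega
  have hAdjH : ∀ (u v : V) (x y : Bool), G.Adj u v → x ≠ y → (u, x) ∉ S → (v, y) ∉ S →
      (dgr H Sᶜ).Adj (u, x) (v, y) := by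
    intro u v x y hadj hxy hu hv
    exact ⟨⟨hadj, hxy⟩, hu, hv⟩
  by_cases hgood : ∃ w ∈ W, ¬ (dgr H Sᶜ).Reachable (w, false) (w, true)
  · obtain ⟨w0, hw0W, hw0good⟩ := hgood
    set C0 : Set V := Subtype.val '' ((G.induce W).connectedComponentMk ⟨w0, hw0W⟩).supp
      with hC0def
    have hC0mem : ∀ y, y ∈ C0 ↔ y ∈ W ∧ (dgr G W).Reachable w0 y := fun y =>
      mem_comp_iff hw0W y
    have hC0W : C0 ⊆ W := fun y hy => ((hC0mem y).mp hy).1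
    have hw0C0 : w0 ∈ C0 := (hC0mem w0).mpr ⟨hw0W, Reachable.refl _⟩
    have hallgood : ∀ w ∈ C0, ¬ (dgr H Sᶜ).Reachable (w, false) (w, true) := by
      intro w hw
      obtain ⟨hwW, hr⟩ := (hC0mem w).mp hw
      have := reach_closed
        (fun v => v ∈ W ∧ ¬ (dgr H Sᶜ).Reachable (v, false) (v, true)) ?_ hr ⟨hw0W, hw0good⟩
      · exact this.2
      · rintro a b ⟨hab, haW, hbW⟩ ⟨_, hag⟩
        refine ⟨hbW, fun hbad => hag ?_⟩
        exact ((Adj.reachable (hAdjH a b false true hab (by simp) (hWS a haW false)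
          (hWS b hbW true))).trans hbad.symm).trans
          (Adj.reachable (hAdjH b a false true hab.symm (by simp) (hWS b hbW false)
            (hWS a haW true)))
    set base : V × Bool := (w0, false) with hbase
    have hex : ∀ w ∈ C0, (dgr H Sᶜ).Reachable base (w, false) ∨
        (dgr H Sᶜ).Reachable base (w, true) := by
      intro w hw
      obtain ⟨hwW, hr⟩ := (hC0mem w).mp hw
      have := reach_closed (fun v => v ∈ W ∧ ((dgr H Sᶜ).Reachable base (v, false) ∨
        (dgr H Sᶜ).Reachable base (v, true))) ?_ hr ⟨hw0W, Or.inl (Reachable.refl _)⟩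
      · exact this.2
      · rintro a b ⟨hab, haW, hbW⟩ ⟨_, hor⟩
        refine ⟨hbW, ?_⟩
        rcases hor with h | h
        · exact Or.inr (h.trans (Adj.reachable (hAdjH a b false true hab (by simp)
            (hWS a haW false) (hWS b hbW true))))
        · exact Or.inl (h.trans (Adj.reachable (hAdjH a b true false hab (by simp)
            (hWS a haW true) (hWS b hbW false))))
    set σ : V → Bool := fun w => decide ((dgr H Sᶜ).Reachable base (w, true)) with hσ
    have hσmem : ∀ w ∈ C0, (dgr H Sᶜ).Reachable base (w, σ w) ∧
        ¬ (dgr H Sᶜ).Reachable base (w, !(σ w)) := by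
      intro w hw
      by_cases h : (dgr H Sᶜ).Reachable base (w, true)
      · have hσw : σ w = true := by simp [hσ, h]
        rw [hσw]
        refine ⟨h, fun hf => hallgood w hw ?_⟩
        simp only [Bool.not_true] at hf
        exact hf.symm.trans h
      · have hσw : σ w = false := by simp [hσ, h]
        rw [hσw]
        exact ⟨(hex w hw).resolve_right h, by simpa using h⟩
    have hσprop : ∀ a b, a ∈ C0 → b ∈ C0 → G.Adj a b → σ a ≠ σ b := by
      intro a b ha hb hab heq
      obtain ⟨hra, _⟩ := hσmem a ha
      obtain ⟨_, hnb⟩ := hσmem b hb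
      apply hnb
      refine hra.trans (Adj.reachable (hAdjH a b (σ a) (!(σ b)) hab ?_
        (hWS a (hC0W ha) _) (hWS b (hC0W hb) _)))
      rw [heq]
      simp
    have hτ : ∀ x ∈ A, ∀ a b, a ∈ C0 → b ∈ C0 → G.Adj x a → G.Adj x b → σ a = σ b := by
      intro x hx a b ha hb hxa hxb
      by_contra hne
      have hsx := (hsA x hx).1
      obtain ⟨hra, hna⟩ := hσmem a ha
      obtain ⟨hrb, hnb⟩ := hσmem b hb
      have hbne : σ b = !(σ a) := bool_ne_eq hne
      by_cases hcase : s x = σ a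
      · have h1 : (dgr H Sᶜ).Reachable base (x, s x) :=
          hrb.trans (Adj.reachable (hAdjH b x (σ b) (s x) hxb.symm
            (by rw [hbne, hcase]; simp) (hWS b (hC0W hb) _) hsx))
        exact hna (h1.trans (Adj.reachable (hAdjH x a (s x) (!(σ a)) hxa
          (by rw [hcase]; simp) hsx (hWS a (hC0W ha) _))))
      · have h3 : σ a = !(s x) := bool_ne_eq hcase
        have h1 : (dgr H Sᶜ).Reachable base (x, s x) :=
          hra.trans (Adj.reachable (hAdjH a x (σ a) (s x) hxa.symm
            (by rw [h3]; simp) (hWS a (hC0W ha) _) hsx))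
        exact hnb (h1.trans (Adj.reachable (hAdjH x b (s x) (!(σ b)) hxb
          (by rw [hbne, h3]; simp) hsx (hWS b (hC0W hb) _))))
    have hABcompl : ((A ∪ B)ᶜ : Set V) = W := by
      have e3 : A ∪ B = S0 ∪ S1 := Set.diff_union_of_subset (fun u hu => Or.inl hu.1)
      rw [e3, hWdef]
    have hxnotW : ∀ x ∈ A, x ∉ W := by
      intro x hx
      rcases hpart x with ⟨_, hna, _⟩ | ⟨_, _, hnw⟩ | ⟨_, hna, _⟩
      · exact absurd hx hna
      · exact hnw
      · exact absurd hx hna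
    have hbp : IsBPair G A B := by
      refine ⟨Set.disjoint_sdiff_left, ?_, C0, ?_, ?_, ?_⟩
      · rw [hABcompl]; exact hWne
      · rw [hABcompl]; exact ⟨_, hC0def⟩
      · exact colorable_of_bool σ hσprop
      · intro x hx
        have hxW : x ∉ W := hxnotW x hx
        have hxC0 : x ∉ C0 := fun hh => hxW (hC0W hh)
        set τ : Bool := if h : ∃ a, a ∈ C0 ∧ G.Adj x a then σ h.choose else true with hτdef
        refine colorable_of_bool (fun w => if w = x then !τ else σ w) ?_
        intro a b ha hb hab
        rcases ha with haC | hax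
        · rcases hb with hbC | hbx
          · have hax' : a ≠ x := fun hh => hxC0 (hh ▸ haC)
            have hbx' : b ≠ x := fun hh => hxC0 (hh ▸ hbC)
            simp only [if_neg hax', if_neg hbx']
            exact hσprop a b haC hbC hab
          · have hbx' : b = x := hbx
            subst hbx'
            have hax' : a ≠ b := G.ne_of_adj hab
            simp only [if_neg hax', if_pos rfl]
            have hexx : ∃ w, w ∈ C0 ∧ G.Adj b w := ⟨a, haC, hab.symm⟩
            have hττ : τ = σ a := by
              rw [hτdef]
              simp only [dif_pos hexx]
              exact hτ b hx hexx.choose a hexx.choose_spec.1 haC hexx.choose_spec.2 hab.symm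
            rw [hττ]
            cases σ a <;> simp
        · have hax' : a = x := hax
          subst hax'
          rcases hb with hbC | hbx
          · have hbx' : b ≠ a := fun hh => (G.ne_of_adj hab) hh.symm
            simp only [if_pos rfl, if_neg hbx']
            have hexx : ∃ w, w ∈ C0 ∧ G.Adj a w := ⟨b, hbC, hab⟩
            have hττ : τ = σ b := by
              rw [hτdef]
              simp only [dif_pos hexx]
              exact hτ a hx hexx.choose b hexx.choose_spec.1 hbC hexx.choose_spec.2 hab
            rw [hττ]
            cases σ b <;> simp
          · have : b = a := hbx
            exact absurd (this ▸ hab) (G.loopless.irrefl a)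
    have := bInv_le G hbp
    omega
  · push_neg at hgood
    have hWreach : ∀ w ∈ W, ∀ x y : Bool, (dgr H Sᶜ).Reachable (w, x) (w, y) := by
      intro w hw x y
      cases x <;> cases y
      · exact Reachable.refl _
      · exact hgood w hw
      · exact (hgood w hw).symm
      · exact Reachable.refl _
    by_cases htwo : ∃ w₁ ∈ W, ∃ w₂ ∈ W, ¬ (dgr H Sᶜ).Reachable (w₁, false) (w₂, false)
    · obtain ⟨w₁, hw₁, w₂, hw₂, h12⟩ := htwo
      set P : Set V := {v | ∃ x, (v, x) ∉ S ∧ (dgr H Sᶜ).Reachable (w₁, false) (v, x)} with hP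
      have hw₁P : w₁ ∈ P := ⟨false, hWS w₁ hw₁ false, Reachable.refl _⟩
      have hw₂P : w₂ ∉ P := by
        rintro ⟨x, hx, hr⟩
        exact h12 (hr.trans (hWreach w₂ hw₂ x false))
      have hspread2 : ∀ a ∈ W, a ∈ P → ∀ b ∉ B, G.Adj a b → b ∈ P := by
        intro a haW haP b hbB hab
        obtain ⟨yb, hyb⟩ : ∃ y, (b, y) ∉ S := by
          rcases hpart b with ⟨h, _, _⟩ | ⟨h, _, _⟩ | ⟨h, _, _⟩
          · exact ⟨false, hWS b h false⟩
          · exact ⟨s b, (hsA b h).1⟩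
          · exact absurd h hbB
        obtain ⟨xa, _, hra⟩ := haP
        exact ⟨yb, hyb, (hra.trans (hWreach a haW xa (!yb))).trans
          (Adj.reachable (hAdjH a b (!yb) yb hab (by simp) (hWS a haW _) hyb))⟩
      set T₁ : Set V := B ∪ (A ∩ P) with hT₁
      set T₂ : Set V := B ∪ (A \ P) with hT₂
      have hmem₁ : ∀ v ∈ W, v ∈ T₁ᶜ := by
        intro v hv hmem
        rcases hpart v with ⟨_, hna, hnb⟩ | ⟨_, _, hnw⟩ | ⟨_, _, hnw⟩
        · rcases hmem with h | h
          · exact hnb h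
          · exact hna h.1
        · exact hnw hv
        · exact hnw hv
      have hmem₂ : ∀ v ∈ W, v ∈ T₂ᶜ := by
        intro v hv hmem
        rcases hpart v with ⟨_, hna, hnb⟩ | ⟨_, _, hnw⟩ | ⟨_, _, hnw⟩
        · rcases hmem with h | h
          · exact hnb h
          · exact hna h.1
        · exact hnw hv
        · exact hnw hv
      have hsep₁ : IsSeparating G T₁ := by
        left
        refine not_connected_of_dgr (x := w₁) (y := w₂) (hmem₁ w₁ hw₁) (hmem₁ w₂ hw₂) ?_
        intro hr
        have := reach_closed (fun v => v ∈ W ∧ v ∈ P) ?_ hr ⟨hw₁, hw₁P⟩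
        · exact hw₂P this.2
        · rintro a b ⟨hab, _, hbT⟩ ⟨haW, haP⟩
          have hbB : b ∉ B := fun hh => hbT (Or.inl hh)
          have hbP : b ∈ P := hspread2 a haW haP b hbB hab
          rcases hpart b with ⟨hbW, _, _⟩ | ⟨hbA, _, _⟩ | ⟨hbBB, _, _⟩
          · exact ⟨hbW, hbP⟩
          · exact absurd (Or.inr ⟨hbA, hbP⟩) hbT
          · exact absurd (Or.inl hbBB) hbT
      have hsep₂ : IsSeparating G T₂ := by
        left
        refine not_connected_of_dgr (x := w₁) (y := w₂) (hmem₂ w₁ hw₁) (hmem₂ w₂ hw₂) ?_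
        intro hr
        have := reach_closed (fun v => v ∈ T₂ᶜ ∧ v ∈ P) ?_ hr ⟨hmem₂ w₁ hw₁, hw₁P⟩
        · exact hw₂P this.2
        · rintro a b ⟨hab, haT, hbT⟩ ⟨_, haP⟩
          refine ⟨hbT, ?_⟩
          rcases hpart b with ⟨hbW, _, _⟩ | ⟨hbA, _, _⟩ | ⟨hbBB, _, _⟩
          · obtain ⟨xa, hxa, hra⟩ := haP
            exact ⟨!xa, hWS b hbW _, hra.trans (Adj.reachable
              (hAdjH a b xa (!xa) hab (by simp) hxa (hWS b hbW _)))⟩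
          · by_contra hbP
            exact hbT (Or.inr ⟨hbA, hbP⟩)
          · exact absurd (Or.inl hbBB) hbT
      have hk₁ := kappa_le hsep₁
      have hk₂ := kappa_le hsep₂
      have hdAB : Disjoint B (A ∩ P) := by
        rw [Set.disjoint_left]
        intro u hu hu2
        exact hu2.1.2 hu
      have hdAB2 : Disjoint B (A \ P) := by
        rw [Set.disjoint_left]
        intro u hu hu2
        exact hu2.1.2 hu
      have hc₁ : T₁.ncard = B.ncard + (A ∩ P).ncard :=
        Set.ncard_union_eq hdAB (Set.toFinite _) (Set.toFinite _)
      have hc₂ : T₂.ncard = B.ncard + (A \ P).ncard :=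
        Set.ncard_union_eq hdAB2 (Set.toFinite _) (Set.toFinite _)
      have hc₃ : (A ∩ P).ncard + (A \ P).ncard = A.ncard :=
        Set.ncard_inter_add_ncard_diff_eq_ncard A P
      omega
    · push_neg at htwo
      obtain ⟨wb, hwb⟩ := hWne
      have hkey : ∃ e ∈ Sᶜ, ∀ w ∈ W, ∀ x, ¬ (dgr H Sᶜ).Reachable e (w, x) := by
        by_cases hpe : (dgr H Sᶜ).Reachable p (wb, false)
        · refine ⟨q, hq, ?_⟩
          intro w hw x hr
          exact hpq (hpe.trans ((((htwo wb hwb w hw).trans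
            (hWreach w hw false x)).trans hr.symm)))
        · refine ⟨p, hp, ?_⟩
          intro w hw x hr
          exact hpe (hr.trans ((hWreach w hw x false).trans (htwo w hw wb hwb)))
      obtain ⟨⟨q₀, y₀⟩, he, hekey⟩ := hkey
      have hq₀W : q₀ ∉ W := fun hh => hekey q₀ hh y₀ (Reachable.refl _)
      have hq₀A : q₀ ∈ A := by
        rcases hpart q₀ with ⟨h, _, _⟩ | ⟨h, _, _⟩ | ⟨h, _, _⟩
        · exact absurd h hq₀W
        · exact h
        · exfalso
          apply he
          cases y₀
          · exact h.1
          · exact h.2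
      have hqW : ∀ w ∈ W, ¬ G.Adj q₀ w := by
        intro w hw hadj
        exact hekey w hw (!y₀)
          (Adj.reachable (hAdjH q₀ w y₀ (!y₀) hadj (by simp) he (hWS w hw _)))
      have hcompl2 : (((A \ {q₀}) ∪ B)ᶜ : Set V) = W ∪ {q₀} := by
        ext v
        simp only [Set.mem_compl_iff, Set.mem_union, Set.mem_diff, Set.mem_singleton_iff]
        constructor
        · intro hv
          rcases hpart v with ⟨h, _, _⟩ | ⟨h, _, _⟩ | ⟨h, _, _⟩
          · exact Or.inl h
          · by_cases hvq : v = q₀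
            · exact Or.inr hvq
            · exact absurd (Or.inl ⟨h, hvq⟩) hv
          · exact absurd (Or.inr h) hv
        · rintro (hv | hv) hmem
          · rcases hpart v with ⟨_, hna, hnb⟩ | ⟨_, _, hnw⟩ | ⟨_, _, hnw⟩
            · rcases hmem with h | h
              · exact hna h.1
              · exact hnb h
            · exact hnw hv
            · exact hnw hv
          · subst hv
            rcases hmem with h | h
            · exact h.2 rfl
            · rcases hpart v with ⟨_, _, hnb⟩ | ⟨_, hnb, _⟩ | _
              · exact hnb h
              · exact hnb h
              · exact absurd hq₀A (by tauto)
      have hbp : IsBPair G (A \ {q₀}) B := by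
        refine ⟨Set.disjoint_of_subset_left Set.diff_subset Set.disjoint_sdiff_left,
          ?_, {q₀}, ?_, ?_, ?_⟩
        · rw [hcompl2]
          exact ⟨q₀, Or.inr rfl⟩
        · rw [hcompl2]
          refine ⟨(G.induce (W ∪ {q₀})).connectedComponentMk ⟨q₀, Or.inr rfl⟩, ?_⟩
          ext v
          constructor
          · intro hv
            have hv' : v = q₀ := hv
            subst hv'
            exact ⟨⟨v, Or.inr rfl⟩, by rw [ConnectedComponent.mem_supp_iff], rfl⟩
          · rintro ⟨a, ha, rfl⟩
            rw [ConnectedComponent.mem_supp_iff] at ha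
            have hr := ConnectedComponent.exact ha
            have := reach_closed (fun z : ↥(W ∪ {q₀}) => z.1 = q₀) ?_ hr.symm rfl
            · exact this
            · rintro z z' hadj hz
              have hGadj : G.Adj z.1 z'.1 := hadj
              rw [hz] at hGadj
              rcases z'.2 with hz' | hz'
              · exact absurd hGadj (hqW z'.1 hz')
              · have : z'.1 = q₀ := hz'
                rw [this] at hGadj
                exact absurd hGadj (G.loopless.irrefl _)
        · refine colorable_of_bool (fun _ => false) ?_
          intro a b ha hb hadj _
          have ha' : a = q₀ := ha
          have hb' : b = q₀ := hb
          rw [ha', hb'] at hadj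
          exact G.loopless.irrefl _ hadj
        · intro x hxd
          refine colorable_of_bool (fun w => decide (w = x)) ?_
          intro a b ha hb hadj hcc
          have hab : a ≠ b := G.ne_of_adj hadj
          by_cases hax : a = x
          · exact hab (hax.trans (((decide_eq_decide.mp hcc).mp hax).symm))
          · have hbx : b ≠ x := fun hbx => hax ((decide_eq_decide.mp hcc).mpr hbx)
            have ha' : a = q₀ := ha.resolve_right hax
            have hb' : b = q₀ := hb.resolve_right hbx
            exact hab (ha'.trans hb'.symm)
      have hval := bInv_le G hbp
      have hsing : (A \ {q₀}).ncard + 1 = A.ncard := Set.ncard_diff_singleton_add_one hq₀A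
      omega


end parts

/-- Main theorem: `κ(G × K₂) = min{2κ(G), b(G)}`. -/
theorem stmt_10 {V : Type u} [Fintype V] [Nonempty V] (G : SimpleGraph V) :
    kappa (timesK2 G) = min (2 * kappa G) (bInv G) := by
  classical
  refine le_antisymm (le_min ?_ ?_) ?_
  · obtain ⟨T, hT, hTe⟩ := kappa_mem G
    have h1 := kappa_le (partI hT)
    rw [ncard_fiber_prod] at h1
    rw [hTe]
    exact h1
  · obtain ⟨X, Y, hbp, hbe⟩ := bInv_mem G
    obtain ⟨S, hsep, hScard⟩ := partII hbp
    have h1 := kappa_le hsep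
    rw [hScard] at h1
    rw [hbe]
    exact h1
  · exact le_kappa (fun S hS => partIII hS)
end

section
/- Let G be connected non-bipartite, and let S ⊆ V(G × K₂) satisfy |S| < min{2κ(G), b(G)} and S'_u := ({u} × {a,b}) − S ≠ ∅ for every u ∈ V(G). Then for each w ∈ V(G), the set S'_w is contained in the vertex set of a single connected component of G × K₂ − S (i.e., when |S'_w| = 2, its two vertices lie in the same component). -/
open SimpleGraph

universe u v

private lemma key_lemma {V : Type u} [Fintype V] (G : SimpleGraph V) (S : Set (V × Bool))
    (hb : S.ncard < bInv G)
    (hne : ∀ u : V, ∃ x : Bool, (u, x) ∉ S) (w : V)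
    (h0 : (w, false) ∉ S) (h1 : (w, true) ∉ S) :
    ((timesK2 G).induce Sᶜ).Reachable ⟨(w, false), h0⟩ ⟨(w, true), h1⟩ := by
  classical
  by_contra hcon
  set H := (timesK2 G).induce Sᶜ with hH
  set X : Set V := Prod.fst '' S with hX
  have hnotX : ∀ u : V, u ∉ X → ∀ i : Bool, (u, i) ∉ S := by
    intro u hu i hui
    exact hu ⟨(u, i), hui, rfl⟩
  set R0 : V → Bool → Prop := fun u i => ∃ h : (u, i) ∉ S,
    H.Reachable ⟨(w, false), h0⟩ ⟨(u, i), h⟩ with hR0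
  set R1 : V → Bool → Prop := fun u i => ∃ h : (u, i) ∉ S,
    H.Reachable ⟨(w, true), h1⟩ ⟨(u, i), h⟩ with hR1
  have hE : ∀ u i, R0 u i → R1 u i → False := by
    rintro u i ⟨hui, r0⟩ ⟨hui', r1⟩
    exact hcon (r0.trans r1.symm)
  have hadjH : ∀ (u v : V) (i j : Bool) (hu : (u,i) ∉ S) (hv : (v,j) ∉ S),
      G.Adj u v → i ≠ j → H.Adj ⟨(u,i), hu⟩ ⟨(v,j), hv⟩ := by
    intro u v i j hu hv ha hij
    exact (⟨ha, hij⟩ : G.Adj u v ∧ (⊤ : SimpleGraph Bool).Adj i j)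
  have step0 : ∀ (u v : V) (i j : Bool), (v, j) ∉ S → G.Adj u v → i ≠ j →
      R0 u i → R0 v j := by
    rintro u v i j hv ha hij ⟨hu, r⟩
    exact ⟨hv, r.trans (hadjH u v i j hu hv ha hij).reachable⟩
  have step1 : ∀ (u v : V) (i j : Bool), (v, j) ∉ S → G.Adj u v → i ≠ j →
      R1 u i → R1 v j := by
    rintro u v i j hv ha hij ⟨hu, r⟩
    exact ⟨hv, r.trans (hadjH u v i j hu hv ha hij).reachable⟩
  have hw0 : w ∉ X := by
    rintro ⟨⟨u, i⟩, hmem, rfl⟩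
    cases i
    · exact h0 hmem
    · exact h1 hmem
  have hwc : w ∈ (Xᶜ : Set V) := hw0
  set G' := G.induce (Xᶜ : Set V) with hG'
  have stepP : ∀ (a b : (Xᶜ : Set V)), G'.Adj a b →
      ((R0 a.1 false ∧ R1 a.1 true) ∨ (R0 a.1 true ∧ R1 a.1 false)) →
      ((R0 b.1 false ∧ R1 b.1 true) ∨ (R0 b.1 true ∧ R1 b.1 false)) := by
    intro a b hab hP
    have ha : G.Adj a.1 b.1 := hab
    have hb0 : ((b : V), false) ∉ S := hnotX _ b.2 _
    have hb1 : ((b : V), true) ∉ S := hnotX _ b.2 _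
    rcases hP with ⟨r0, r1⟩ | ⟨r0, r1⟩
    · exact Or.inr ⟨step0 _ _ _ _ hb1 ha (by decide) r0,
        step1 _ _ _ _ hb0 ha (by decide) r1⟩
    · exact Or.inl ⟨step0 _ _ _ _ hb0 ha (by decide) r0,
        step1 _ _ _ _ hb1 ha (by decide) r1⟩
  have walkP : ∀ (a b : (Xᶜ : Set V)) (p : G'.Walk a b),
      ((R0 a.1 false ∧ R1 a.1 true) ∨ (R0 a.1 true ∧ R1 a.1 false)) →
      ((R0 b.1 false ∧ R1 b.1 true) ∨ (R0 b.1 true ∧ R1 b.1 false)) := by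
    intro a b p
    induction p with
    | nil => exact id
    | cons h p ih => exact fun hP => ih (stepP _ _ h hP)
  set K := G'.connectedComponentMk ⟨w, hwc⟩ with hK
  set D : Set V := Subtype.val '' K.supp with hDdef
  have hmemD : ∀ u, u ∈ D → ∃ hu : u ∈ (Xᶜ : Set V), G'.Reachable ⟨u, hu⟩ ⟨w, hwc⟩ := by
    rintro u ⟨⟨u', hu'⟩, hsupp, rfl⟩
    have : G'.connectedComponentMk ⟨u', hu'⟩ = K := hsupp
    exact ⟨hu', ConnectedComponent.exact this⟩
  have hDX : ∀ u ∈ D, ∀ i : Bool, (u, i) ∉ S := by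
    intro u hu i
    obtain ⟨hu', _⟩ := hmemD u hu
    exact hnotX u hu' i
  have dichD : ∀ u ∈ D, (R0 u false ∧ R1 u true) ∨ (R0 u true ∧ R1 u false) := by
    intro u hu
    obtain ⟨hu', hr⟩ := hmemD u hu
    obtain ⟨p⟩ := hr.symm
    exact walkP _ _ p (Or.inl ⟨⟨h0, Reachable.refl _⟩, ⟨h1, Reachable.refl _⟩⟩)
  set cB : V → Bool := fun u => if R0 u true then true else false with hcB
  have cB_spec : ∀ u ∈ D,
      (cB u = false ∧ R0 u false ∧ R1 u true) ∨
      (cB u = true ∧ R0 u true ∧ R1 u false) := by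
    intro u hu
    rcases dichD u hu with ⟨r0, r1⟩ | ⟨r0, r1⟩
    · have hnr : ¬ R0 u true := fun h => hE u true h r1
      exact Or.inl ⟨by simp [hcB, hnr], r0, r1⟩
    · exact Or.inr ⟨by simp [hcB, r0], r0, r1⟩
  have PD : ∀ u v, u ∈ D → v ∈ D → G.Adj u v → cB u ≠ cB v := by
    intro u v hu hv ha heq
    rcases cB_spec u hu with ⟨cu, r0u, r1u⟩ | ⟨cu, r0u, r1u⟩ <;>
      rcases cB_spec v hv with ⟨cv, r0v, r1v⟩ | ⟨cv, r0v, r1v⟩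
    · exact hE v true (step0 u v false true (hDX v hv true) ha (by decide) r0u) r1v
    · rw [cu, cv] at heq; exact absurd heq (by decide)
    · rw [cu, cv] at heq; exact absurd heq (by decide)
    · exact hE v false (step0 u v true false (hDX v hv false) ha (by decide) r0u) r1v
  have colD : (G.induce D).Colorable 2 := by
    have cc : (G.induce D).Coloring Bool :=
      SimpleGraph.Coloring.mk (fun a => cB a.1) (by
        intro a b hab
        exact PD a.1 b.1 a.2 b.2 hab)
    have := cc.colorable
    rwa [Fintype.card_bool] at this
  have AG : ∀ (x : V), ∀ u v, u ∈ D → v ∈ D → G.Adj x u → G.Adj x v →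
      cB u = cB v := by
    intro x u v hu hv hxu hxv
    by_contra hne'
    obtain ⟨i, hxi⟩ := hne x
    have hu' : (u, !i) ∉ S := hDX u hu _
    have hv' : (v, !i) ∉ S := hDX v hv _
    have e1 : H.Adj ⟨(x,i), hxi⟩ ⟨(u, !i), hu'⟩ :=
      hadjH _ _ _ _ _ _ hxu (by cases i <;> decide)
    have e2 : H.Adj ⟨(x,i), hxi⟩ ⟨(v, !i), hv'⟩ :=
      hadjH _ _ _ _ _ _ hxv (by cases i <;> decide)
    have huv : H.Reachable ⟨(u, !i), hu'⟩ ⟨(v, !i), hv'⟩ :=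
      e1.symm.reachable.trans e2.reachable
    rcases cB_spec u hu with ⟨cu, r0u, r1u⟩ | ⟨cu, r0u, r1u⟩ <;>
      rcases cB_spec v hv with ⟨cv, r0v, r1v⟩ | ⟨cv, r0v, r1v⟩
    · exact hne' (cu.trans cv.symm)
    · cases i
      · obtain ⟨_, ru⟩ := r1u
        obtain ⟨_, rv⟩ := r0v
        exact hcon (rv.trans (huv.symm.trans ru.symm))
      · obtain ⟨_, ru⟩ := r0u
        obtain ⟨_, rv⟩ := r1v
        exact hcon (ru.trans (huv.trans rv.symm))
    · cases i
      · obtain ⟨_, ru⟩ := r0u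
        obtain ⟨_, rv⟩ := r1v
        exact hcon (ru.trans (huv.trans rv.symm))
      · obtain ⟨_, ru⟩ := r1u
        obtain ⟨_, rv⟩ := r0v
        exact hcon (rv.trans (huv.symm.trans ru.symm))
    · exact hne' (cu.trans cv.symm)
  have colDx : ∀ x ∈ X, (G.induce (D ∪ {x})).Colorable 2 := by
    intro x hxX
    by_cases hex : ∃ u, u ∈ D ∧ G.Adj x u
    · obtain ⟨u0, hu0D, hu0a⟩ := hex
      have cc : (G.induce (D ∪ {x})).Coloring Bool :=
        SimpleGraph.Coloring.mk
          (fun a => if a.1 = x then !cB u0 else cB a.1) (by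
          intro a b hab
          have hadj : G.Adj a.1 b.1 := hab
          by_cases hax : a.1 = x <;> by_cases hbx : b.1 = x
          · exact absurd hadj (by rw [hax, hbx]; exact G.loopless.irrefl x)
          · have hbD : b.1 ∈ D := by
              rcases b.2 with h | h
              · exact h
              · exact absurd h hbx
            have heq : cB b.1 = cB u0 :=
              AG x b.1 u0 hbD hu0D (by have h' := hadj; rw [hax] at h'; exact h') hu0a
            simp [hax, hbx, heq]
          · have haD : a.1 ∈ D := by
              rcases a.2 with h | h
              · exact h
              · exact absurd h hax
            have heq : cB a.1 = cB u0 :=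
              AG x a.1 u0 haD hu0D (by have h' := hadj.symm; rw [hbx] at h'; exact h') hu0a
            simp [hax, hbx, heq]
          · have haD : a.1 ∈ D := by
              rcases a.2 with h | h
              · exact h
              · exact absurd h hax
            have hbD : b.1 ∈ D := by
              rcases b.2 with h | h
              · exact h
              · exact absurd h hbx
            simpa [hax, hbx] using PD a.1 b.1 haD hbD hadj)
      have := cc.colorable
      rwa [Fintype.card_bool] at this
    · have cc : (G.induce (D ∪ {x})).Coloring Bool :=
        SimpleGraph.Coloring.mk
          (fun a => if a.1 = x then true else cB a.1) (by
          intro a b hab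
          have hadj : G.Adj a.1 b.1 := hab
          by_cases hax : a.1 = x <;> by_cases hbx : b.1 = x
          · exact absurd hadj (by rw [hax, hbx]; exact G.loopless.irrefl x)
          · have hbD : b.1 ∈ D := by
              rcases b.2 with h | h
              · exact h
              · exact absurd h hbx
            exact absurd ⟨b.1, hbD, by have h' := hadj; rw [hax] at h'; exact h'⟩ hex
          · have haD : a.1 ∈ D := by
              rcases a.2 with h | h
              · exact h
              · exact absurd h hax
            exact absurd ⟨a.1, haD, by have h' := hadj.symm; rw [hbx] at h'; exact h'⟩ hex
          · have haD : a.1 ∈ D := by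
              rcases a.2 with h | h
              · exact h
              · exact absurd h hax
            have hbD : b.1 ∈ D := by
              rcases b.2 with h | h
              · exact h
              · exact absurd h hbx
            simpa [hax, hbx] using PD a.1 b.1 haD hbD hadj)
      have := cc.colorable
      rwa [Fintype.card_bool] at this
  have hbp : IsBPair G X ∅ := by
    refine ⟨by simp, ⟨w, by simp [hw0]⟩, D, ?_, colD, fun x hx => colDx x hx⟩
    rw [Set.union_empty]
    exact ⟨K, rfl⟩
  have hle : bInv G ≤ X.ncard :=
    Nat.sInf_le ⟨X, ∅, hbp, by simp⟩
  have hxs : X.ncard ≤ S.ncard := Set.ncard_image_le S.toFinite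
  omega

/-- Under the same hypotheses, each class `S'_w` lies inside a single connected
component of `G × K₂ − S`. -/
theorem stmt_13 {V : Type u} [Fintype V] (G : SimpleGraph V)
    (hconn : G.Connected) (hnbip : ¬ G.Colorable 2) (S : Set (V × Bool))
    (hsize : S.ncard < min (2 * kappa G) (bInv G))
    (hne : ∀ u : V, ∃ x : Bool, (u, x) ∉ S) :
    ∀ p q : (Sᶜ : Set (V × Bool)), (p : V × Bool).1 = (q : V × Bool).1 →
      ((timesK2 G).induce Sᶜ).Reachable p q := by
  have hb : S.ncard < bInv G := lt_of_lt_of_le hsize (min_le_right _ _)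
  rintro ⟨⟨u, x⟩, hp⟩ ⟨⟨v, y⟩, hq⟩ huv
  have huv' : u = v := huv
  subst huv'
  cases x <;> cases y
  · exact Reachable.refl _
  · exact key_lemma G S hb hne u hp hq
  · exact (key_lemma G S hb hne u hq hp).symm
  · exact Reachable.refl _
end

section
/- If S₀ is a separating set of G, then S₀ × {a, b} is a separating set of G × K₂ whenever G is connected and non-bipartite; hence κ(G × K₂) ≤ 2κ(G). -/
open SimpleGraph

universe u v

section Aux

variable {V : Type u}

lemma mem_compl_prod' {S₀ : Set V} {p : V × Bool} :
    p ∈ ((S₀ ×ˢ (Set.univ : Set Bool))ᶜ : Set (V × Bool)) ↔ p.1 ∈ S₀ᶜ := by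
  simp [Set.mem_prod]

lemma sep_prod (G : SimpleGraph V) (S₀ : Set V) (hsep : IsSeparating G S₀) :
    IsSeparating (timesK2 G) (S₀ ×ˢ (Set.univ : Set Bool)) := by
  left
  intro hc
  let f : ((timesK2 G).induce (S₀ ×ˢ (Set.univ : Set Bool))ᶜ) →g (G.induce S₀ᶜ) :=
    { toFun := fun p => ⟨p.val.1, mem_compl_prod'.mp p.property⟩
      map_rel' := by
        rintro ⟨p, hp⟩ ⟨q, hq⟩ h
        exact (show G.Adj _ _ ∧ _ from h).1 }
  have hfsurj : Function.Surjective f := by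
    rintro ⟨u, hu⟩
    exact ⟨⟨(u, false), mem_compl_prod'.mpr hu⟩, rfl⟩
  rcases hsep with hdis | hss
  · exact hdis (hc.map f hfsurj)
  · obtain ⟨⟨v, b⟩, hv⟩ := hc.nonempty
    have hv' : v ∈ S₀ᶜ := mem_compl_prod'.mp hv
    have hreach := hc.preconnected ⟨(v, false), mem_compl_prod'.mpr hv'⟩
      ⟨(v, true), mem_compl_prod'.mpr hv'⟩
    obtain ⟨w⟩ := hreach
    cases w with
    | cons h _ =>
      rename_i x _
      have h1 : G.Adj v x.val.1 := (show G.Adj _ _ ∧ _ from h).1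
      have := hss hv' (mem_compl_prod'.mp x.property)
      rw [this] at h1
      exact G.loopless.irrefl _ h1

lemma ncard_prod_univ [Fintype V] (s : Set V) :
    (s ×ˢ (Set.univ : Set Bool)).ncard = 2 * s.ncard := by
  classical
  rw [Set.ncard_eq_toFinset_card' (s ×ˢ _), Set.toFinset_prod, Finset.card_product,
    Set.ncard_eq_toFinset_card' s]
  simp [mul_comm]

end Aux

/-- If `G` is connected and non-bipartite and `S₀` is a separating set of `G`, then
`S₀ × {a,b}` is a separating set of `G × K₂`; hence `κ(G × K₂) ≤ 2κ(G)`. -/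
theorem stmt_18 {V : Type u} [Fintype V] (G : SimpleGraph V)
    (hconn : G.Connected) (hnbip : ¬ G.Colorable 2)
    (S₀ : Set V) (hsep : IsSeparating G S₀) :
    IsSeparating (timesK2 G) (S₀ ×ˢ (Set.univ : Set Bool)) ∧
    kappa (timesK2 G) ≤ 2 * kappa G := by
  refine ⟨sep_prod G S₀ hsep, ?_⟩
  have hne : {n | ∃ S : Set V, IsSeparating G S ∧ n = S.ncard}.Nonempty :=
    ⟨(Set.univ : Set V).ncard, Set.univ, Or.inr (by simp [IsSeparating]), rfl⟩
  obtain ⟨S, hS, hcard⟩ := Nat.sInf_mem hne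
  calc kappa (timesK2 G) ≤ (S ×ˢ (Set.univ : Set Bool)).ncard :=
        Nat.sInf_le ⟨_, sep_prod G S hS, rfl⟩
    _ = 2 * S.ncard := ncard_prod_univ S
    _ = 2 * kappa G := by rw [kappa, ← hcard]
end
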